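/- If a : Fin N → ℝ is a cyclic orthonormal generator in ℝ^N, then for every n ∈ Fin N the complex number ∑_{j ∈ Fin N} a_j · exp(i(π/4 − (2πn/N)·j)) has absolute value 1. -/

import Mathlib

open Real Complex

theorem cog_complex_abs_one (N : ℕ) (hN : 2 ≤ N) [NeZero N] (a : Fin N → ℝ)
    (ha : ∀ s : Fin N, (∑ j : Fin N, a j * a (j + s)) = if s = 0 then 1 else 0) :
    ∀ n : Fin N,
      ‖∑ j : Fin N, (a j : ℂ) *
        Complex.exp (Complex.I * ((Real.pi / 4 - (2 * Real.pi * (n : ℕ) / N) * (j : ℕ) : ℝ) : ℂ))‖ = 1 := by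
  intro n
  have hN0 : (N : ℝ) ≠ 0 := Nat.cast_ne_zero.mpr (NeZero.ne N)
  set θ : ℝ := 2 * Real.pi * (n : ℕ) / N with hθ
  set g : Fin N → ℂ := fun j => Complex.exp (-(Complex.I * ((θ * j.1 : ℝ) : ℂ))) with hg
  have hθN : (Complex.exp (-(Complex.I * ((θ * N : ℝ) : ℂ)))) = 1 := by
    have h1 : (θ * N : ℝ) = 2 * Real.pi * (n : ℕ) := by rw [hθ]; field_simp
    rw [h1]
    have h2 := Complex.exp_int_mul_two_pi_mul_I (-((n : ℕ) : ℤ))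
    rw [← h2]
    congr 1
    push_cast
    ring
  have hgmul : ∀ j s : Fin N, g (j + s) = g j * g s := by
    intro j s
    have hval : j.1 + s.1 = (j + s).1 + N * ((j.1 + s.1) / N) := by
      rw [Fin.add_def]
      exact (Nat.mod_add_div _ _).symm
    have h2 : g j * g s = Complex.exp (-(Complex.I * ((θ * (j.1 + s.1) : ℝ) : ℂ))) := by
      rw [hg, ← Complex.exp_add]; congr 1; push_cast; ring
    rw [h2]
    have hvalR : ((j.1 : ℝ) + (s.1 : ℝ)) = (((j + s).1 : ℕ) : ℝ) + (N : ℝ) * (((j.1 + s.1) / N : ℕ) : ℝ) := by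
      exact_mod_cast hval
    have hc : (-(Complex.I * ((θ * (j.1 + s.1) : ℝ) : ℂ)))
        = (-(Complex.I * ((θ * (j + s).1 : ℝ) : ℂ))) + ((j.1 + s.1) / N : ℕ) * (-(Complex.I * ((θ * N : ℝ) : ℂ))) := by
      push_cast
      rw [show ((j.1 : ℂ) + (s.1 : ℂ)) = (((j + s).1 : ℕ) : ℂ) + (N : ℂ) * (((j.1 + s.1) / N : ℕ) : ℂ) by exact_mod_cast hvalR]
      ring
    rw [hc, Complex.exp_add, Complex.exp_nat_mul, hθN, one_pow, mul_one, hg]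
  have hgunit : ∀ j : Fin N, g j * (starRingEnd ℂ) (g j) = 1 := by
    intro j
    rw [hg, ← Complex.exp_conj, ← Complex.exp_add]
    simp
  have hsplit : (∑ j : Fin N, (a j : ℂ) *
        Complex.exp (Complex.I * ((Real.pi / 4 - (2 * Real.pi * (n : ℕ) / N) * (j : ℕ) : ℝ) : ℂ)))
      = Complex.exp (Complex.I * ((Real.pi / 4 : ℝ) : ℂ)) * ∑ j : Fin N, (a j : ℂ) * g j := by
    rw [Finset.mul_sum]
    refine Finset.sum_congr rfl fun j _ => ?_
    rw [hg]
    rw [show (Complex.exp (Complex.I * ((Real.pi / 4 : ℝ) : ℂ))) * ((a j : ℂ) * Complex.exp (-(Complex.I * ((θ * j.1 : ℝ) : ℂ))))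
      = (a j : ℂ) * (Complex.exp (Complex.I * ((Real.pi / 4 : ℝ) : ℂ)) * Complex.exp (-(Complex.I * ((θ * j.1 : ℝ) : ℂ)))) by ring]
    rw [← Complex.exp_add]
    congr 2
    push_cast [hθ]
    ring
  rw [hsplit, norm_mul]
  have habs1 : ‖Complex.exp (Complex.I * ((Real.pi / 4 : ℝ) : ℂ))‖ = 1 := by
    rw [Complex.norm_exp]; simp
  rw [habs1, one_mul]
  set w : ℂ := ∑ j : Fin N, (a j : ℂ) * g j with hw
  have key : w * (starRingEnd ℂ) w = 1 := by
    rw [hw, map_sum, Finset.sum_mul_sum]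
    have step : ∀ j : Fin N, (∑ k : Fin N, ((a j : ℂ) * g j) * ((starRingEnd ℂ) ((a k : ℂ) * g k)))
        = ∑ s : Fin N, ((a j : ℂ) * (a (j + s) : ℂ)) * (starRingEnd ℂ) (g s) := by
      intro j
      rw [← Equiv.sum_comp (Equiv.addLeft j) (fun k => ((a j : ℂ) * g j) * ((starRingEnd ℂ) ((a k : ℂ) * g k)))]
      refine Finset.sum_congr rfl fun s _ => ?_
      simp only [Equiv.coe_addLeft]
      rw [map_mul, hgmul j s, map_mul, Complex.conj_ofReal]
      calc (a j : ℂ) * g j * ((a (j + s) : ℂ) * ((starRingEnd ℂ) (g j) * (starRingEnd ℂ) (g s)))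
          = ((a j : ℂ) * (a (j + s) : ℂ)) * (starRingEnd ℂ) (g s) * (g j * (starRingEnd ℂ) (g j)) := by ring
        _ = ((a j : ℂ) * (a (j + s) : ℂ)) * (starRingEnd ℂ) (g s) := by rw [hgunit j, mul_one]
    calc (∑ j : Fin N, ∑ k : Fin N, ((a j : ℂ) * g j) * ((starRingEnd ℂ) ((a k : ℂ) * g k)))
        = ∑ j : Fin N, ∑ s : Fin N, ((a j : ℂ) * (a (j + s) : ℂ)) * (starRingEnd ℂ) (g s) := by
          exact Finset.sum_congr rfl fun j _ => step j
      _ = ∑ s : Fin N, (∑ j : Fin N, ((a j : ℂ) * (a (j + s) : ℂ))) * (starRingEnd ℂ) (g s) := by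
          rw [Finset.sum_comm]
          exact Finset.sum_congr rfl fun s _ => (Finset.sum_mul ..).symm
      _ = ∑ s : Fin N, (if s = 0 then (starRingEnd ℂ) (g s) else 0) := by
          refine Finset.sum_congr rfl fun s _ => ?_
          have h4 : (∑ j : Fin N, ((a j : ℂ) * (a (j + s) : ℂ))) = (((if s = 0 then 1 else 0 : ℝ)) : ℂ) := by
            rw [← ha s]; push_cast; ring
          rw [h4]
          split_ifs <;> simp
      _ = (starRingEnd ℂ) (g 0) := by
          rw [Finset.sum_ite_eq' Finset.univ (0 : Fin N) (fun s => (starRingEnd ℂ) (g s))]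
          simp
      _ = 1 := by
          have : g 0 = 1 := by
            rw [hg]
            simp
          rw [this, map_one]
  have hnsq : Complex.normSq w = 1 := by
    have := Complex.mul_conj w
    rw [key] at this
    exact_mod_cast this.symm
  rw [Complex.norm_def, hnsq, Real.sqrt_one]
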